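/- For all λ, μ > 0, t ≥ 0, k ∈ ℤ and real z > 0, the series Σ_{j∈ℤ} z^{2j}·p_{2k,2j}(t;λ,μ) converges absolutely and equals e^{−(λ+μ)t}·(z^{2k}/h(z))·[ h(z)·cosh(t·h(z)/z) + z(μ−λ)·sinh(t·h(z)/z) ]. -/

import Mathlib

open scoped BigOperators

/-- Inner binomial sum `∑_{k=0}^{n-m} C(n,k) C(n,k+m) ρ^{-2k-m}`. -/
noncomputable def innerSum (ρ : ℝ) (m n : ℕ) : ℝ :=
  ∑ k ∈ Finset.range (n - m + 1),
    (n.choose k : ℝ) * (n.choose (k + m) : ℝ) * ρ ^ (-(2 * (k : ℤ) + (m : ℤ)))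

/-- Series `∑_{n≥m} [x^{2n}/(2n)! + c·x^{2n+1}/(2n+1)!]·innerSum ρ m n`. -/
noncomputable def evenSeries (x c ρ : ℝ) (m : ℕ) : ℝ :=
  ∑' j : ℕ,
    ((x ^ (2 * (m + j)) / (2 * (m + j)).factorial) +
      c * (x ^ (2 * (m + j) + 1) / (2 * (m + j) + 1).factorial)) * innerSum ρ m (m + j)

/-- Series `∑_{n≥m} x^{2n+1}/(2n+1)!·innerSum ρ m n`. -/
noncomputable def oddSeries (x ρ : ℝ) (m : ℕ) : ℝ :=
  ∑' j : ℕ,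
    (x ^ (2 * (m + j) + 1) / (2 * (m + j) + 1).factorial) * innerSum ρ m (m + j)

/-- `p_{2l,2r}(t;λ,μ)`. -/
noncomputable def pEE (lam mu t : ℝ) (l r : ℤ) : ℝ :=
  Real.exp (-(lam + mu) * t) *
    evenSeries (lam * t) ((mu - lam) / lam) (lam / mu) (r - l).natAbs

/-- `p_{2l,2r+1}(t;λ,μ)`. -/
noncomputable def pEO (lam mu t : ℝ) (l r : ℤ) : ℝ :=
  Real.exp (-(lam + mu) * t) *
    (oddSeries (lam * t) (lam / mu) (r - l).natAbs +
      oddSeries (lam * t) (lam / mu) (r - l + 1).natAbs)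

/-- `p_{2l+1,2r}(t;λ,μ)`. -/
noncomputable def pOE (lam mu t : ℝ) (l r : ℤ) : ℝ :=
  Real.exp (-(lam + mu) * t) *
    (oddSeries (mu * t) (mu / lam) (r - l - 1).natAbs +
      oddSeries (mu * t) (mu / lam) (r - l).natAbs)

/-- `p_{2l+1,2r+1}(t;λ,μ)`. -/
noncomputable def pOO (lam mu t : ℝ) (l r : ℤ) : ℝ :=
  Real.exp (-(lam + mu) * t) *
    evenSeries (mu * t) ((lam - mu) / mu) (mu / lam) (r - l).natAbs

/-- Transition probability `p_{k,n}(t;λ,μ)`, by parity of the states. -/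
noncomputable def transP (lam mu t : ℝ) (k n : ℤ) : ℝ :=
  if k % 2 = 0 then
    if n % 2 = 0 then pEE lam mu t (k / 2) (n / 2)
    else pEO lam mu t (k / 2) ((n - 1) / 2)
  else
    if n % 2 = 0 then pOE lam mu t ((k - 1) / 2) (n / 2)
    else pOO lam mu t ((k - 1) / 2) ((n - 1) / 2)

/-- `h(z) = √((μz²+λ)(λz²+μ))`. -/
noncomputable def hFun (lam mu z : ℝ) : ℝ := Real.sqrt ((mu * z ^ 2 + lam) * (lam * z ^ 2 + mu))

lemma innerSum_nonneg {ρ : ℝ} (hρ : 0 < ρ) (m n : ℕ) : 0 ≤ innerSum ρ m n := by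
  refine Finset.sum_nonneg fun i _ => ?_
  positivity

lemma innerSum_eq_zero {ρ : ℝ} {m n : ℕ} (h : n < m) : innerSum ρ m n = 0 := by
  unfold innerSum
  rw [Nat.sub_eq_zero_of_le h.le]
  rw [Finset.sum_range_one]
  rw [Nat.choose_eq_zero_of_lt (show n < 0 + m by omega)]
  simp

lemma key_identity {w ρ : ℝ} (hw : 0 < w) (hρ : 0 < ρ) (n : ℕ) :
    ∑ d ∈ Finset.Icc (-(n : ℤ)) (n : ℤ), w ^ d * innerSum ρ d.natAbs n
      = ((1 + w / ρ) * (1 + 1 / (w * ρ))) ^ n := by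
  set T : ℕ → ℕ → ℝ := fun a b =>
    (n.choose a : ℝ) * (n.choose b : ℝ) * w ^ ((b : ℤ) - a) * ρ ^ (-((a : ℤ) + b)) with hT
  have hterm : ∀ a b : ℕ,
      ((n.choose a : ℝ) * (1 / (w * ρ)) ^ a) * ((n.choose b : ℝ) * (w / ρ) ^ b) = T a b := by
    intro a b
    simp only [hT]
    rw [zpow_sub₀ hw.ne', show -((a : ℤ) + b) = -(a : ℤ) + -(b : ℤ) by ring,
      zpow_add₀ hρ.ne', zpow_neg, zpow_neg, zpow_natCast, zpow_natCast, zpow_natCast]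
    simp only [zpow_natCast, div_pow, one_div, mul_pow, inv_pow]
    field_simp
  have e1 : (1 + w / ρ) ^ n = ∑ b ∈ Finset.range (n + 1), (n.choose b : ℝ) * (w / ρ) ^ b := by
    rw [add_comm, add_pow]
    exact Finset.sum_congr rfl fun b _ => by ring
  have e2 : (1 + 1 / (w * ρ)) ^ n
      = ∑ a ∈ Finset.range (n + 1), (n.choose a : ℝ) * (1 / (w * ρ)) ^ a := by
    rw [add_comm, add_pow]
    exact Finset.sum_congr rfl fun a _ => by ring
  have hrhs : ((1 + w / ρ) * (1 + 1 / (w * ρ))) ^ n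
      = ∑ a ∈ Finset.range (n + 1), ∑ b ∈ Finset.range (n + 1), T a b := by
    rw [mul_pow, e1, e2, mul_comm, Finset.sum_mul_sum]
    exact Finset.sum_congr rfl fun a _ => Finset.sum_congr rfl fun b _ => hterm a b
  rw [hrhs]
  have hite : ∀ d ∈ Finset.Icc (-(n : ℤ)) (n : ℤ),
      w ^ d * innerSum ρ d.natAbs n =
        ∑ a ∈ Finset.range (n + 1), ∑ b ∈ Finset.range (n + 1),
          if (b : ℤ) - a = d then T a b else 0 := by
    intro d hd
    rw [Finset.mem_Icc] at hd
    rcases le_or_gt 0 d with hd0 | hd0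
    · -- d = m ≥ 0
      obtain ⟨m, rfl⟩ := Int.eq_ofNat_of_zero_le hd0
      have hmn : m ≤ n := by omega
      have hnab : (m : ℤ).natAbs = m := Int.natAbs_natCast m
      have step1 : ∀ a : ℕ,
          (∑ b ∈ Finset.range (n + 1), if (b : ℤ) - a = (m : ℤ) then T a b else 0)
            = T a (a + m) := by
        intro a
        have hcond : ∀ b : ℕ, ((b : ℤ) - a = (m : ℤ)) ↔ (b = a + m) := by
          intro b; constructor <;> intro hb <;> omega
        rw [Finset.sum_congr rfl fun b _ => by
          rw [show (if (b : ℤ) - a = (m : ℤ) then T a b else 0)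
              = (if b = a + m then T a b else 0) by simp [hcond b]]]
        rw [Finset.sum_ite_eq' (Finset.range (n + 1)) (a + m) (T a)]
        by_cases hle : a + m ∈ Finset.range (n + 1)
        · rw [if_pos hle]
        · rw [if_neg hle]
          rw [Finset.mem_range] at hle
          simp [hT, Nat.choose_eq_zero_of_lt (show n < a + m by omega)]
      rw [Finset.sum_congr rfl fun a _ => step1 a]
      have hsub : ∑ a ∈ Finset.range (n + 1), T a (a + m)
          = ∑ a ∈ Finset.range (n - m + 1), T a (a + m) := by
        refine (Finset.sum_subset ?_ ?_).symm
        · intro a ha; rw [Finset.mem_range] at ha ⊢; omega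
        · intro a ha ha'
          rw [Finset.mem_range] at ha ha'
          simp [hT, Nat.choose_eq_zero_of_lt (show n < a + m by omega)]
      rw [hsub, hnab]
      unfold innerSum
      rw [Finset.mul_sum]
      refine Finset.sum_congr rfl fun a _ => ?_
      simp only [hT]
      push_cast
      rw [show ((a : ℤ) + m - a) = (m : ℤ) by ring,
        show -((a : ℤ) + ((a : ℤ) + (m : ℤ))) = -(2 * (a : ℤ) + m) by ring]
      ring
    · -- d < 0
      obtain ⟨m, rfl⟩ : ∃ m : ℕ, d = -(m : ℤ) := ⟨d.natAbs, by omega⟩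
      have hmn : m ≤ n := by omega
      have hnab : (-(m : ℤ)).natAbs = m := by simp
      rw [Finset.sum_comm]
      have step1 : ∀ b : ℕ,
          (∑ a ∈ Finset.range (n + 1), if (b : ℤ) - a = -(m : ℤ) then T a b else 0)
            = T (b + m) b := by
        intro b
        have hcond : ∀ a : ℕ, ((b : ℤ) - a = -(m : ℤ)) ↔ (a = b + m) := by
          intro a; constructor <;> intro hb <;> omega
        rw [Finset.sum_congr rfl fun a _ => by
          rw [show (if (b : ℤ) - a = -(m : ℤ) then T a b else 0)
              = (if a = b + m then T a b else 0) by simp [hcond a]]]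
        rw [Finset.sum_ite_eq' (Finset.range (n + 1)) (b + m) (fun a => T a b)]
        by_cases hle : b + m ∈ Finset.range (n + 1)
        · rw [if_pos hle]
        · rw [if_neg hle]
          rw [Finset.mem_range] at hle
          simp [hT, Nat.choose_eq_zero_of_lt (show n < b + m by omega)]
      rw [Finset.sum_congr rfl fun b _ => step1 b]
      have hsub : ∑ b ∈ Finset.range (n + 1), T (b + m) b
          = ∑ b ∈ Finset.range (n - m + 1), T (b + m) b := by
        refine (Finset.sum_subset ?_ ?_).symm
        · intro a ha; rw [Finset.mem_range] at ha ⊢; omega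
        · intro a ha ha'
          rw [Finset.mem_range] at ha ha'
          simp [hT, Nat.choose_eq_zero_of_lt (show n < a + m by omega)]
      rw [hsub, hnab]
      unfold innerSum
      rw [Finset.mul_sum]
      refine Finset.sum_congr rfl fun b _ => ?_
      simp only [hT]
      push_cast
      rw [show ((b : ℤ) - ((b : ℤ) + (m : ℤ))) = -(m : ℤ) by ring,
        show -(((b : ℤ) + (m : ℤ)) + (b : ℤ)) = -(2 * (b : ℤ) + m) by ring]
      ring
  rw [Finset.sum_congr rfl hite, Finset.sum_comm]
  refine Finset.sum_congr rfl fun a ha => ?_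
  rw [Finset.sum_comm]
  refine Finset.sum_congr rfl fun b hb => ?_
  rw [Finset.sum_ite_eq (Finset.Icc (-(n : ℤ)) (n : ℤ)) ((b : ℤ) - a) (fun _ => T a b)]
  rw [Finset.mem_range] at ha hb
  rw [if_pos (by rw [Finset.mem_Icc]; omega)]

lemma support_fact {z ρ : ℝ} (k : ℤ) (n : ℕ) :
    ∀ j : ℤ, j ∉ Finset.Icc (k - n) (k + n) →
      z ^ (2 * j) * innerSum ρ (j - k).natAbs n = 0 := by
  intro j hj
  rw [Finset.mem_Icc] at hj
  rw [innerSum_eq_zero (show n < (j - k).natAbs by omega), mul_zero]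

lemma sum_over_j {z ρ : ℝ} (hz : 0 < z) (hρ : 0 < ρ) (k : ℤ) (n : ℕ) :
    ∑ j ∈ Finset.Icc (k - n) (k + n), z ^ (2 * j) * innerSum ρ (j - k).natAbs n
      = z ^ (2 * k) * ((1 + z ^ 2 / ρ) * (1 + 1 / (z ^ 2 * ρ))) ^ n := by
  have hmap : Finset.Icc (k - (n : ℤ)) (k + n)
      = Finset.map (addLeftEmbedding k) (Finset.Icc (-(n : ℤ)) n) := by
    rw [Finset.map_add_left_Icc, sub_eq_add_neg]
  rw [hmap, Finset.sum_map]
  have hterm : ∀ d : ℤ,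
      z ^ (2 * (addLeftEmbedding k d)) * innerSum ρ ((addLeftEmbedding k d) - k).natAbs n
        = z ^ (2 * k) * ((z ^ 2) ^ d * innerSum ρ d.natAbs n) := by
    intro d
    have h1 : addLeftEmbedding k d = k + d := rfl
    have h2 : z ^ ((2 : ℤ) * d) = (z ^ 2) ^ d := by
      rw [zpow_mul, show (2 : ℤ) = ((2 : ℕ) : ℤ) by norm_num, zpow_natCast]
    rw [h1, show k + d - k = d by ring, show 2 * (k + d) = 2 * k + 2 * d by ring,
      zpow_add₀ hz.ne', h2]
    ring
  rw [Finset.sum_congr rfl fun d _ => hterm d, ← Finset.mul_sum,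
    key_identity (by positivity) hρ n]

lemma tsum_over_j {z ρ : ℝ} (hz : 0 < z) (hρ : 0 < ρ) (k : ℤ) (n : ℕ) :
    ∑' j : ℤ, z ^ (2 * j) * innerSum ρ (j - k).natAbs n
      = z ^ (2 * k) * ((1 + z ^ 2 / ρ) * (1 + 1 / (z ^ 2 * ρ))) ^ n := by
  rw [tsum_eq_sum (support_fact k n), sum_over_j hz hρ k n]

lemma evenSeries_tsum (x c ρ : ℝ) (m : ℕ) :
    (∑' j : ℕ,
      ((x ^ (2 * (m + j)) / (2 * (m + j)).factorial) +
        c * (x ^ (2 * (m + j) + 1) / (2 * (m + j) + 1).factorial)) * innerSum ρ m (m + j))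
    = ∑' n : ℕ,
      ((x ^ (2 * n) / (2 * n).factorial) +
        c * (x ^ (2 * n + 1) / (2 * n + 1).factorial)) * innerSum ρ m n := by
  have hinj : Function.Injective (fun j : ℕ => m + j) := fun a b h => by simpa using h
  have hsupp : Function.support (fun n : ℕ =>
      ((x ^ (2 * n) / (2 * n).factorial) + c * (x ^ (2 * n + 1) / (2 * n + 1).factorial))
        * innerSum ρ m n) ⊆ Set.range (fun j : ℕ => m + j) := by
    intro n hn
    rcases le_or_gt m n with h | h
    · exact ⟨n - m, by simp; omega⟩
    · exact absurd (by simp only []; rw [innerSum_eq_zero h, mul_zero]) hn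
  exact hinj.tsum_eq hsupp

noncomputable def Acoef (x c : ℝ) (n : ℕ) : ℝ :=
  x ^ (2 * n) / (2 * n).factorial + c * (x ^ (2 * n + 1) / (2 * n + 1).factorial)

noncomputable def Fterm (x c ρ zz : ℝ) (k : ℤ) (n : ℕ) (j : ℤ) : ℝ :=
  zz ^ (2 * j) * (Acoef x c n * innerSum ρ (j - k).natAbs n)

lemma core (x c ρ zz y : ℝ) (hx : 0 ≤ x) (hρ : 0 < ρ) (hzz : 0 < zz) (k : ℤ)
    (hy : y = x * Real.sqrt ((1 + zz ^ 2 / ρ) * (1 + 1 / (zz ^ 2 * ρ)))) :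
    Summable (fun j : ℤ => |zz ^ (2 * j) * ∑' n : ℕ, Acoef x c n * innerSum ρ (j - k).natAbs n|) ∧
    ∑' j : ℤ, (zz ^ (2 * j) * ∑' n : ℕ, Acoef x c n * innerSum ρ (j - k).natAbs n)
      = zz ^ (2 * k) *
          (Real.cosh y + c * x * ∑' n : ℕ, y ^ (2 * n) / (2 * n + 1).factorial) := by
  set G : ℝ := (1 + zz ^ 2 / ρ) * (1 + 1 / (zz ^ 2 * ρ)) with hGdef
  have hG : 0 < G := by positivity
  have hy0 : 0 ≤ y := by rw [hy]; positivity
  have hkey : x ^ 2 * G = y ^ 2 := by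
    rw [hy, mul_pow, Real.sq_sqrt hG.le]
  have hcoef : ∀ n : ℕ, x ^ (2 * n) * G ^ n = y ^ (2 * n) := by
    intro n; rw [pow_mul, pow_mul, ← mul_pow, hkey]
  have hcoef' : ∀ n : ℕ, x ^ (2 * n + 1) * G ^ n = x * y ^ (2 * n) := by
    intro n
    rw [pow_succ, show x ^ (2 * n) * x * G ^ n = x * (x ^ (2 * n) * G ^ n) by ring, hcoef n]
  have hzp : ∀ j : ℤ, (0 : ℝ) < zz ^ (2 * j) := fun j => zpow_pos hzz _
  have habsF : ∀ n j, |Fterm x c ρ zz k n j|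
      = zz ^ (2 * j) * (|Acoef x c n| * innerSum ρ (j - k).natAbs n) := by
    intro n j
    rw [Fterm, abs_mul, abs_mul, abs_of_pos (hzp j),
      abs_of_nonneg (innerSum_nonneg hρ _ _)]
  have hAB : ∀ n, |Acoef x c n| ≤ Acoef x |c| n := by
    intro n
    unfold Acoef
    refine (abs_add_le _ _).trans ?_
    rw [abs_of_nonneg (by positivity), abs_mul,
      abs_of_nonneg (by positivity : (0:ℝ) ≤ x ^ (2 * n + 1) / (2 * n + 1).factorial)]
  have hSig : Summable (fun n : ℕ => y ^ (2 * n) / (2 * n + 1).factorial) := by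
    refine Summable.of_nonneg_of_le (fun n => by positivity) (fun n => ?_)
      (Real.hasSum_cosh y).summable
    gcongr
    omega
  have hcosh : Summable (fun n : ℕ => y ^ (2 * n) / (2 * n).factorial) :=
    (Real.hasSum_cosh y).summable
  have hAG : ∀ c' : ℝ, ∀ n : ℕ, Acoef x c' n * (zz ^ (2 * k) * G ^ n)
      = zz ^ (2 * k) * (y ^ (2 * n) / (2 * n).factorial)
        + (zz ^ (2 * k) * (c' * x)) * (y ^ (2 * n) / (2 * n + 1).factorial) := by
    intro c' n
    have e1 := hcoef n; have e2 := hcoef' n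
    calc Acoef x c' n * (zz ^ (2 * k) * G ^ n)
        = zz ^ (2 * k) * ((x ^ (2 * n) * G ^ n) / (2 * n).factorial)
          + zz ^ (2 * k) * c' * ((x ^ (2 * n + 1) * G ^ n) / (2 * n + 1).factorial) := by
          unfold Acoef; ring
      _ = _ := by rw [e1, e2]; ring
  have hsumAG : ∀ c' : ℝ, Summable (fun n : ℕ => Acoef x c' n * (zz ^ (2 * k) * G ^ n)) := by
    intro c'
    refine Summable.congr ?_ (fun n => (hAG c' n).symm)
    exact (hcosh.mul_left _).add (hSig.mul_left _)
  have htsumAG : ∀ c' : ℝ, ∑' n : ℕ, Acoef x c' n * (zz ^ (2 * k) * G ^ n)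
      = zz ^ (2 * k) * Real.cosh y
        + (zz ^ (2 * k) * (c' * x)) * ∑' n : ℕ, y ^ (2 * n) / (2 * n + 1).factorial := by
    intro c'
    rw [tsum_congr (hAG c'), Summable.tsum_add (hcosh.mul_left _) (hSig.mul_left _),
      tsum_mul_left, tsum_mul_left, Real.cosh_eq_tsum]
  have hsupp : ∀ n : ℕ, ∀ j ∉ Finset.Icc (k - (n : ℤ)) (k + n), Fterm x c ρ zz k n j = 0 := by
    intro n j hj
    rw [Finset.mem_Icc] at hj
    rw [Fterm, innerSum_eq_zero (show n < (j - k).natAbs by omega), mul_zero, mul_zero]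
  have hS1 : ∀ n, Summable fun j => |Fterm x c ρ zz k n j| := fun n =>
    summable_of_ne_finset_zero (fun j hj => by
      show |Fterm x c ρ zz k n j| = 0
      rw [hsupp n j hj, abs_zero])
  have hrowsum : ∀ n : ℕ, ∑' j : ℤ, |Fterm x c ρ zz k n j|
      ≤ Acoef x |c| n * (zz ^ (2 * k) * G ^ n) := by
    intro n
    rw [tsum_eq_sum (f := fun j => |Fterm x c ρ zz k n j|)
      (fun j hj => by
        show |Fterm x c ρ zz k n j| = 0
        rw [hsupp n j hj, abs_zero])]
    have hb : ∑ j ∈ Finset.Icc (k - (n : ℤ)) (k + n), |Fterm x c ρ zz k n j|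
        ≤ ∑ j ∈ Finset.Icc (k - (n : ℤ)) (k + n),
            Acoef x |c| n * (zz ^ (2 * j) * innerSum ρ (j - k).natAbs n) := by
      refine Finset.sum_le_sum fun j _ => ?_
      rw [habsF]
      calc zz ^ (2 * j) * (|Acoef x c n| * innerSum ρ (j - k).natAbs n)
          ≤ zz ^ (2 * j) * (Acoef x |c| n * innerSum ρ (j - k).natAbs n) := by
            refine mul_le_mul_of_nonneg_left
              (mul_le_mul_of_nonneg_right (hAB n) (innerSum_nonneg hρ _ _)) (hzp j).le
        _ = Acoef x |c| n * (zz ^ (2 * j) * innerSum ρ (j - k).natAbs n) := by ring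
    refine hb.trans ?_
    rw [← Finset.mul_sum, sum_over_j hzz hρ k n]
  have hS2 : Summable (fun p : ℕ × ℤ => |Fterm x c ρ zz k p.1 p.2|) := by
    refine (summable_prod_of_nonneg (fun p => abs_nonneg _)).mpr ⟨fun n => hS1 n, ?_⟩
    exact Summable.of_nonneg_of_le (fun n => tsum_nonneg fun j => abs_nonneg _)
      hrowsum (hsumAG |c|)
  have hSuncurry : Summable (Function.uncurry (Fterm x c ρ zz k)) := by
    rw [← summable_abs_iff]
    exact hS2
  have hprodZ : Summable (fun p : ℤ × ℕ => |Fterm x c ρ zz k p.2 p.1|) :=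
    ((Equiv.prodComm ℤ ℕ).summable_iff (f := fun p : ℕ × ℤ => |Fterm x c ρ zz k p.1 p.2|)).2 hS2
  have hrow : ∀ j : ℤ, Summable fun n => |Fterm x c ρ zz k n j| := fun j =>
    ((summable_prod_of_nonneg (fun p => abs_nonneg _)).mp hprodZ).1 j
  have hcol : Summable fun j : ℤ => ∑' n : ℕ, |Fterm x c ρ zz k n j| :=
    ((summable_prod_of_nonneg (fun p => abs_nonneg _)).mp hprodZ).2
  have hinner : ∀ j : ℤ,
      zz ^ (2 * j) * ∑' n : ℕ, Acoef x c n * innerSum ρ (j - k).natAbs n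
        = ∑' n : ℕ, Fterm x c ρ zz k n j := by
    intro j
    rw [← tsum_mul_left]
    exact tsum_congr fun n => rfl
  constructor
  · refine Summable.of_nonneg_of_le (fun j => abs_nonneg _) (fun j => ?_) hcol
    rw [hinner j]
    simpa [Real.norm_eq_abs] using
      norm_tsum_le_tsum_norm (f := fun n => Fterm x c ρ zz k n j)
        (by simpa [Real.norm_eq_abs] using hrow j)
  · calc ∑' j : ℤ, (zz ^ (2 * j) * ∑' n : ℕ, Acoef x c n * innerSum ρ (j - k).natAbs n)
        = ∑' j : ℤ, ∑' n : ℕ, Fterm x c ρ zz k n j := tsum_congr hinner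
      _ = ∑' n : ℕ, ∑' j : ℤ, Fterm x c ρ zz k n j :=
        Summable.tsum_comm' hSuncurry (fun n => summable_abs_iff.mp (hS1 n))
          (fun j => summable_abs_iff.mp (hrow j))
      _ = ∑' n : ℕ, Acoef x c n * (zz ^ (2 * k) * G ^ n) := by
        refine tsum_congr fun n => ?_
        have : ∀ j : ℤ, Fterm x c ρ zz k n j
            = Acoef x c n * (zz ^ (2 * j) * innerSum ρ (j - k).natAbs n) := by
          intro j; rw [Fterm]; ring
        rw [tsum_congr this, tsum_mul_left,
          tsum_eq_sum (s := Finset.Icc (k - (n : ℤ)) (k + n)) (fun j hj => by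
            rw [Finset.mem_Icc] at hj
            rw [innerSum_eq_zero (show n < (j - k).natAbs by omega), mul_zero]),
          sum_over_j hzz hρ k n]
      _ = zz ^ (2 * k) * Real.cosh y
          + (zz ^ (2 * k) * (c * x)) * ∑' n : ℕ, y ^ (2 * n) / (2 * n + 1).factorial :=
        htsumAG c
      _ = _ := by ring

/-- Even–even generating function: `∑_{j∈ℤ} z^{2j} p_{2k,2j}(t)` converges absolutely and
equals `e^{-(λ+μ)t}·(z^{2k}/h(z))·[h(z)cosh(t h(z)/z) + z(μ-λ)sinh(t h(z)/z)]`. -/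
theorem even_generating_function (lam mu : ℝ) (hlam : 0 < lam) (hmu : 0 < mu)
    (t : ℝ) (ht : 0 ≤ t) (k : ℤ) (z : ℝ) (hz : 0 < z) :
    Summable (fun j : ℤ => |z ^ (2 * j) * transP lam mu t (2 * k) (2 * j)|) ∧
    ∑' j : ℤ, z ^ (2 * j) * transP lam mu t (2 * k) (2 * j) =
      Real.exp (-(lam + mu) * t) * (z ^ (2 * k) / hFun lam mu z) *
        (hFun lam mu z * Real.cosh (t * hFun lam mu z / z) +
          z * (mu - lam) * Real.sinh (t * hFun lam mu z / z)) := by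
  have hρ : 0 < lam / mu := div_pos hlam hmu
  have hx : 0 ≤ lam * t := mul_nonneg hlam.le ht
  have hh : 0 < hFun lam mu z := Real.sqrt_pos.mpr (by positivity)
  have hsqrtG : Real.sqrt ((1 + z ^ 2 / (lam / mu)) * (1 + 1 / (z ^ 2 * (lam / mu))))
      = hFun lam mu z / (lam * z) := by
    have hGval : (1 + z ^ 2 / (lam / mu)) * (1 + 1 / (z ^ 2 * (lam / mu)))
        = (Real.sqrt ((mu * z ^ 2 + lam) * (lam * z ^ 2 + mu)) / (lam * z)) ^ 2 := by
      rw [div_pow, Real.sq_sqrt (by positivity)]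
      field_simp
      ring
    rw [hGval, Real.sqrt_sq (by positivity)]
    rfl
  have hyy : t * hFun lam mu z / z
      = (lam * t) * Real.sqrt ((1 + z ^ 2 / (lam / mu)) * (1 + 1 / (z ^ 2 * (lam / mu)))) := by
    rw [hsqrtG]
    field_simp
  obtain ⟨hsum, hval⟩ := core (lam * t) ((mu - lam) / lam) (lam / mu) z
    (t * hFun lam mu z / z) hx hρ hz k hyy
  have hev : ∀ m : ℕ, evenSeries (lam * t) ((mu - lam) / lam) (lam / mu) m
      = ∑' n : ℕ, Acoef (lam * t) ((mu - lam) / lam) n * innerSum (lam / mu) m n := by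
    intro m
    exact (evenSeries_tsum _ _ _ m).trans (tsum_congr fun n => by rw [Acoef])
  have htrans : ∀ j : ℤ, z ^ (2 * j) * transP lam mu t (2 * k) (2 * j)
      = Real.exp (-(lam + mu) * t) *
          (z ^ (2 * j) *
            ∑' n : ℕ, Acoef (lam * t) ((mu - lam) / lam) n
              * innerSum (lam / mu) (j - k).natAbs n) := by
    intro j
    have h0 : transP lam mu t (2 * k) (2 * j) = pEE lam mu t k j := by
      unfold transP
      rw [if_pos (Int.mul_emod_right 2 k), if_pos (Int.mul_emod_right 2 j),
        Int.mul_ediv_cancel_left k two_ne_zero, Int.mul_ediv_cancel_left j two_ne_zero]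
    rw [h0, pEE, show evenSeries (lam * t) ((mu - lam) / lam) (lam / mu) (j - k).natAbs
      = ∑' n : ℕ, Acoef (lam * t) ((mu - lam) / lam) n
          * innerSum (lam / mu) (j - k).natAbs n from hev _]
    ring
  constructor
  · have heq : (fun j : ℤ => |z ^ (2 * j) * transP lam mu t (2 * k) (2 * j)|)
        = fun j : ℤ => Real.exp (-(lam + mu) * t) *
            |z ^ (2 * j) * ∑' n : ℕ, Acoef (lam * t) ((mu - lam) / lam) n
              * innerSum (lam / mu) (j - k).natAbs n| := by
      funext j
      rw [htrans j, abs_mul, abs_of_pos (Real.exp_pos _)]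
    rw [heq]
    exact hsum.mul_left _
  · rw [tsum_congr htrans, tsum_mul_left, hval]
    have hsinh : Real.sinh (t * hFun lam mu z / z)
        = (t * hFun lam mu z / z) *
            ∑' n : ℕ, (t * hFun lam mu z / z) ^ (2 * n) / (2 * n + 1).factorial := by
      rw [Real.sinh_eq_tsum, ← tsum_mul_left]
      exact tsum_congr fun n => by rw [pow_succ]; ring
    rw [hsinh]
    field_simp
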